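/- Oscillation Theorem (sign-change form). With the notation below, assume additionally that u(j) ≠ 0 for every 1 ≤ j ≤ m-1. Then the number of indices j ∈ {0,…,m-1} with u(j)·u(j+1) < 0 equals the number of eigenvalues of the real symmetric matrix J_m, counted with multiplicity, that are strictly greater than E. -/

import Mathlib

open Finset Module Matrix

/-- Coordinate subspace spanned by standard basis vectors indexed by `S`. -/
noncomputable def coordSub {m : ℕ} (S : Finset (Fin m)) : Submodule ℝ (Fin m → ℝ) :=
  Submodule.span ℝ ((fun i => Pi.single i (1 : ℝ)) '' ↑S)

lemma mem_coordSub {m : ℕ} (S : Finset (Fin m)) (x : Fin m → ℝ) :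
    x ∈ coordSub S ↔ ∀ i ∉ S, x i = 0 := by
  have hb : ⇑(Pi.basisFun ℝ (Fin m)) = fun i => Pi.single i (1 : ℝ) := by
    ext i j; simp [Pi.basisFun_apply]
  rw [coordSub, ← hb, Basis.mem_span_image]
  constructor
  · intro h i hi
    by_contra hx
    have : i ∈ ((Pi.basisFun ℝ (Fin m)).repr x).support := by
      simp [Pi.basisFun_repr, hx]
    exact hi (h this)
  · intro h i hi
    by_contra hiS
    have := h i hiS
    simp [Pi.basisFun_repr] at hi
    exact hi this

lemma finrank_coordSub {m : ℕ} (S : Finset (Fin m)) :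
    finrank ℝ (coordSub S) = S.card := by
  classical
  have hli : LinearIndependent ℝ (fun i : S => Pi.single (i : Fin m) (1 : ℝ) : S → (Fin m → ℝ)) := by
    have : LinearIndependent ℝ (fun i : Fin m => Pi.single i (1 : ℝ) : Fin m → (Fin m → ℝ)) := by
      have hb : ⇑(Pi.basisFun ℝ (Fin m)) = fun i => Pi.single i (1 : ℝ) := by
        ext i j; simp [Pi.basisFun_apply]
      rw [← hb]; exact (Pi.basisFun ℝ (Fin m)).linearIndependent
    exact this.comp _ Subtype.coe_injective
  have : coordSub S = Submodule.span ℝ (Set.range (fun i : S => Pi.single (i : Fin m) (1 : ℝ) : S → (Fin m → ℝ))) := by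
    rw [coordSub]; congr 1; ext x; simp [Set.mem_image, Set.mem_range]
  rw [this, finrank_span_eq_card hli]
  simp

lemma inertia_le {m : ℕ} (Q : (Fin m → ℝ) → ℝ) (ν δ : Fin m → ℝ)
    (r s : (Fin m → ℝ) ≃ₗ[ℝ] (Fin m → ℝ))
    (hr : ∀ x, Q x = ∑ i, ν i * (r x i) ^ 2)
    (hs : ∀ x, Q x = ∑ i, δ i * (s x i) ^ 2) :
    (univ.filter fun i => 0 < ν i).card ≤ (univ.filter fun i => 0 < δ i).card := by
  classical
  set Sν : Finset (Fin m) := univ.filter fun i => 0 < ν i with hSν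
  set Sδ : Finset (Fin m) := univ.filter fun i => 0 < δ i with hSδ
  set Wp : Submodule ℝ (Fin m → ℝ) := (coordSub Sν).comap r.toLinearMap with hWp
  set Wn : Submodule ℝ (Fin m → ℝ) := (coordSub Sδᶜ).comap s.toLinearMap with hWn
  -- Q is positive on nonzero elements of Wp
  have hQp : ∀ x ∈ Wp, x ≠ 0 → 0 < Q x := by
    intro x hx hx0
    have hmem : ∀ i ∉ Sν, r x i = 0 := (mem_coordSub _ _).1 hx
    have hrx : r x ≠ 0 := by
      intro h; exact hx0 (by simpa using congrArg r.symm h)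
    obtain ⟨i0, hi0⟩ : ∃ i, r x i ≠ 0 := by
      by_contra h; push_neg at h; exact hrx (funext h)
    have hi0S : i0 ∈ Sν := by
      by_contra h; exact hi0 (hmem i0 h)
    rw [hr]
    apply Finset.sum_pos' ?_ ⟨i0, mem_univ _, ?_⟩
    · intro i _
      by_cases hiS : i ∈ Sν
      · have : 0 < ν i := by simpa [hSν] using hiS
        positivity
      · simp [hmem i hiS]
    · have hν : 0 < ν i0 := by simpa [hSν] using hi0S
      have : 0 < (r x i0) ^ 2 := by positivity
      positivity
  have hQn : ∀ x ∈ Wn, Q x ≤ 0 := by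
    intro x hx
    have hmem : ∀ i ∉ Sδᶜ, s x i = 0 := (mem_coordSub _ _).1 hx
    rw [hs]
    apply Finset.sum_nonpos
    intro i _
    by_cases hiS : i ∈ Sδ
    · simp [hmem i (by simpa using hiS)]
    · have : δ i ≤ 0 := by simpa [hSδ, not_lt] using hiS
      have h2 : 0 ≤ (s x i) ^ 2 := sq_nonneg _
      exact mul_nonpos_of_nonpos_of_nonneg this h2
  have hinf : Wp ⊓ Wn = ⊥ := by
    rw [Submodule.eq_bot_iff]
    intro x hx
    by_contra hx0
    exact absurd (hQn x hx.2) (not_le.2 (hQp x hx.1 hx0))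
  have hfp : finrank ℝ Wp = Sν.card := by
    rw [hWp, Submodule.comap_equiv_eq_map_symm, LinearEquiv.finrank_map_eq,
      finrank_coordSub]
  have hfn : finrank ℝ Wn = m - Sδ.card := by
    rw [hWn, Submodule.comap_equiv_eq_map_symm, LinearEquiv.finrank_map_eq,
      finrank_coordSub, card_compl, Fintype.card_fin]
  have hsum : finrank ℝ Wp + finrank ℝ Wn ≤ m := by
    have := Submodule.finrank_sup_add_finrank_inf_eq Wp Wn
    rw [hinf, finrank_bot, add_zero] at this
    calc finrank ℝ Wp + finrank ℝ Wn = finrank ℝ ↥(Wp ⊔ Wn) := this.symm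
      _ ≤ finrank ℝ (Fin m → ℝ) := Submodule.finrank_le _
      _ = m := by simp
  have hcard : Sδ.card ≤ m := by
    simpa using Finset.card_filter_le univ (fun i => 0 < δ i)
  omega

noncomputable def rEig {m : ℕ} {J : Matrix (Fin m) (Fin m) ℝ} (hHerm : J.IsHermitian) :
    (Fin m → ℝ) ≃ₗ[ℝ] (Fin m → ℝ) :=
  (WithLp.linearEquiv 2 ℝ (Fin m → ℝ)).symm ≪≫ₗ
    hHerm.eigenvectorBasis.repr.toLinearEquiv ≪≫ₗ WithLp.linearEquiv 2 ℝ (Fin m → ℝ)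

lemma eig_expand {m : ℕ} {J : Matrix (Fin m) (Fin m) ℝ} (hHerm : J.IsHermitian) (E : ℝ)
    (x : Fin m → ℝ) :
    x ⬝ᵥ (J *ᵥ x) - E * (x ⬝ᵥ x) =
      ∑ i, (hHerm.eigenvalues i - E) * (rEig hHerm x i) ^ 2 := by
  classical
  set v := hHerm.eigenvectorBasis with hv
  set xE : EuclideanSpace ℝ (Fin m) := (WithLp.equiv 2 (Fin m → ℝ)).symm x with hxE
  set c : Fin m → ℝ := fun i => v.repr xE i with hc
  have hrE : ∀ i, rEig hHerm x i = c i := by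
    intro i; rfl
  have hinner_dot : ∀ z w : EuclideanSpace ℝ (Fin m),
      (WithLp.equiv 2 (Fin m → ℝ) z) ⬝ᵥ (WithLp.equiv 2 (Fin m → ℝ) w) = inner (𝕜 := ℝ) z w := by
    intro z w
    simp [dotProduct, PiLp.inner_apply, RCLike.inner_apply, mul_comm]
  have hsum : (∑ i, c i • v i) = xE := v.sum_repr xE
  have hcv : ∀ i, inner (𝕜 := ℝ) xE (v i) = c i := by
    intro i
    rw [real_inner_comm, ← OrthonormalBasis.repr_apply_apply]
  -- J *ᵥ x as Euclidean element
  have hT : (WithLp.equiv 2 (Fin m → ℝ)).symm (J *ᵥ x) = Matrix.toEuclideanLin J xE := by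
    simp [Matrix.toEuclideanLin_apply, hxE]
  have hTsum : Matrix.toEuclideanLin J xE = ∑ i, (c i * hHerm.eigenvalues i) • v i := by
    rw [← hsum, map_sum]
    refine Finset.sum_congr rfl fun i _ => ?_
    rw [_root_.map_smul]
    have : Matrix.toEuclideanLin J (v i) = hHerm.eigenvalues i • v i := by
      apply (WithLp.equiv 2 (Fin m → ℝ)).injective
      simp only [Matrix.toEuclideanLin_apply]
      simpa using hHerm.mulVec_eigenvectorBasis i
    rw [this, smul_smul, mul_comm]
  have h1 : x ⬝ᵥ (J *ᵥ x) = ∑ i, hHerm.eigenvalues i * c i ^ 2 := by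
    have := hinner_dot xE ((WithLp.equiv 2 (Fin m → ℝ)).symm (J *ᵥ x))
    rw [show (WithLp.equiv 2 (Fin m → ℝ)) xE = x from rfl] at this
    rw [show (WithLp.equiv 2 (Fin m → ℝ)) ((WithLp.equiv 2 (Fin m → ℝ)).symm (J *ᵥ x)) = J *ᵥ x
      from Equiv.apply_symm_apply _ _] at this
    rw [this, hT, hTsum, inner_sum]
    refine Finset.sum_congr rfl fun i _ => ?_
    rw [real_inner_smul_right, hcv]
    ring
  have h2 : x ⬝ᵥ x = ∑ i, c i ^ 2 := by
    have := hinner_dot xE xE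
    rw [show (WithLp.equiv 2 (Fin m → ℝ)) xE = x from rfl] at this
    rw [this]
    nth_rewrite 2 [← hsum]
    rw [inner_sum]
    refine Finset.sum_congr rfl fun i _ => ?_
    rw [real_inner_smul_right, hcv]
    ring
  rw [h1, h2, Finset.mul_sum, ← Finset.sum_sub_distrib]
  refine Finset.sum_congr rfl fun i _ => ?_
  rw [hrE]
  ring

lemma quad_expand {m : ℕ} (hm : 1 ≤ m) (a b : ℕ → ℝ)
    (J : Matrix (Fin m) (Fin m) ℝ)
    (hJ : ∀ i j : Fin m, J i j =
      if (i : ℕ) = (j : ℕ) then b i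
      else if (i : ℕ) + 1 = (j : ℕ) then a i
      else if (j : ℕ) + 1 = (i : ℕ) then a j
      else 0)
    (x : Fin m → ℝ) (x' : ℕ → ℝ)
    (hx' : ∀ k : ℕ, x' k = if h : k < m then x ⟨k, h⟩ else 0) :
    x ⬝ᵥ (J *ᵥ x) = ∑ i ∈ range m, b i * x' i ^ 2
      + ∑ i ∈ range m, 2 * a i * x' i * x' (i + 1) := by
  classical
  set g : ℕ → ℕ → ℝ := fun i j =>
    x' i * ((if i = j then b i else if i + 1 = j then a i
      else if j + 1 = i then a j else 0) * x' j) with hg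
  have hx'lt : ∀ (i : Fin m), x' (i : ℕ) = x i := by
    intro i; rw [hx', dif_pos i.isLt]
  have hx'ge : ∀ k, m ≤ k → x' k = 0 := by
    intro k hk; rw [hx', dif_neg (by omega)]
  have step1 : x ⬝ᵥ (J *ᵥ x) = ∑ i ∈ range m, ∑ j ∈ range m, g i j := by
    have : x ⬝ᵥ (J *ᵥ x) = ∑ i : Fin m, ∑ j : Fin m, g (i : ℕ) (j : ℕ) := by
      simp only [dotProduct, mulVec, dotProduct, Finset.mul_sum]
      refine Finset.sum_congr rfl fun i _ => Finset.sum_congr rfl fun j _ => ?_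
      simp only [hg]
      rw [hJ i j]
      simp only [hx'lt]
    rw [this, ← Fin.sum_univ_eq_sum_range (fun i => ∑ j ∈ range m, g i j) m]
    refine Finset.sum_congr rfl fun i _ => ?_
    rw [← Fin.sum_univ_eq_sum_range (fun j => g (i : ℕ) j) m]
  have split : ∀ i j : ℕ, g i j =
      (if j = i then b i * x' i * x' j else 0)
      + (if j = i + 1 then a i * x' i * x' j else 0)
      + (if i = j + 1 then a j * x' i * x' j else 0) := by
    intro i j
    simp only [hg]
    by_cases h1 : i = j
    · subst h1
      simp [show ¬i = i + 1 by omega, show ¬i + 1 = i by omega]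
      ring
    · by_cases h2 : i + 1 = j
      · subst h2
        simp [h1, show ¬i + 1 = i by omega, show ¬i = i + 1 + 1 by omega]
        ring
      · by_cases h3 : j + 1 = i
        · subst h3
          simp [h1, h2, show ¬j = j + 1 by omega, show ¬j + 1 = j + 1 + 1 by omega,
            show ¬j = j + 1 + 1 by omega]
          ring
        · simp [h1, h2, h3, show ¬j = i by omega, show ¬j = i + 1 by omega,
            show ¬i = j + 1 by omega]
  have inner_eval : ∀ i, i ∈ range m → ∑ j ∈ range m, g i j =
      b i * x' i ^ 2 + a i * x' i * x' (i + 1)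
        + (if i = 0 then 0 else a (i - 1) * x' i * x' (i - 1)) := by
    intro i hi
    rw [Finset.mem_range] at hi
    simp only [split]
    rw [Finset.sum_add_distrib, Finset.sum_add_distrib,
      Finset.sum_ite_eq' (range m) i (fun j => b i * x' i * x' j),
      Finset.sum_ite_eq' (range m) (i+1) (fun j => a i * x' i * x' j)]
    have h1 : (if i ∈ range m then b i * x' i * x' i else 0) = b i * x' i ^ 2 := by
      rw [if_pos (Finset.mem_range.2 hi)]; ring
    have h2 : (if i + 1 ∈ range m then a i * x' i * x' (i+1) else 0)
        = a i * x' i * x' (i + 1) := by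
      by_cases h : i + 1 ∈ range m
      · rw [if_pos h]
      · rw [if_neg h, hx'ge (i+1) (by simpa using h), mul_zero]
    rw [h1, h2]
    congr 1
    rcases i with _ | k
    · rw [if_pos rfl]
      apply Finset.sum_eq_zero
      intro j _
      rw [if_neg (by omega)]
    · rw [if_neg (by omega)]
      have : ∀ j, (if k + 1 = j + 1 then a j * x' (k+1) * x' j else 0)
          = (if j = k then a j * x' (k+1) * x' j else 0) := by
        intro j
        by_cases h : j = k
        · subst h; simp
        · rw [if_neg (by omega), if_neg h]
      simp only [this]
      rw [Finset.sum_ite_eq' (range m) k (fun j => a j * x' (k+1) * x' j),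
        if_pos (Finset.mem_range.2 (by omega))]
      simp
  rw [step1, Finset.sum_congr rfl inner_eval]
  have h3 : ∑ i ∈ range m, (if i = 0 then 0 else a (i - 1) * x' i * x' (i - 1))
      = ∑ i ∈ range m, a i * x' i * x' (i + 1) := by
    obtain ⟨m', rfl⟩ : ∃ m', m = m' + 1 := ⟨m - 1, by omega⟩
    rw [Finset.sum_range_succ' (fun i => if i = 0 then 0 else a (i - 1) * x' i * x' (i - 1)) m',
      Finset.sum_range_succ (fun i => a i * x' i * x' (i + 1)) m']
    rw [hx'ge (m' + 1) (by omega)]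
    norm_num
    refine Finset.sum_congr rfl fun i _ => by ring
  rw [Finset.sum_add_distrib, Finset.sum_add_distrib, h3, add_assoc,
    ← Finset.sum_add_distrib]
  congr 1
  refine Finset.sum_congr rfl fun i _ => ?_
  ring

lemma dot_self_expand {m : ℕ} (x : Fin m → ℝ) (x' : ℕ → ℝ)
    (hx' : ∀ k : ℕ, x' k = if h : k < m then x ⟨k, h⟩ else 0) :
    x ⬝ᵥ x = ∑ i ∈ range m, x' i ^ 2 := by
  rw [← Fin.sum_univ_eq_sum_range (fun i => x' i ^ 2) m]
  simp only [dotProduct]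
  refine Finset.sum_congr rfl fun i _ => ?_
  rw [hx', dif_pos i.isLt]
  ring

lemma key_identity {m : ℕ} (hm : 1 ≤ m) (E : ℝ) (a b u : ℕ → ℝ)
    (ha : ∀ n, n ≤ m - 1 → 0 < a n)
    (hu0 : u 0 = 1)
    (hurec : ∀ n, n < m → a n * u (n + 1) =
      (E - b n) * u n - (if n = 0 then 0 else a (n - 1) * u (n - 1)))
    (hnz : ∀ j, 1 ≤ j → j ≤ m - 1 → u j ≠ 0)
    (d : ℕ → ℝ) (hd : ∀ k, d k = a k * u (k + 1) / u k)
    (x' : ℕ → ℝ) (hx'ge : ∀ k, m ≤ k → x' k = 0) :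
    ∑ k ∈ range m, (-(d k)) * (x' k - a k / d k * x' (k + 1)) ^ 2
      = ∑ i ∈ range m, (b i - E) * x' i ^ 2
        + ∑ i ∈ range m, 2 * a i * x' i * x' (i + 1) := by
  have hnz' : ∀ k, k ≤ m - 1 → u k ≠ 0 := by
    intro k hk
    rcases Nat.eq_zero_or_pos k with rfl | hk1
    · rw [hu0]; norm_num
    · exact hnz k hk1 hk
  have hd0 : d 0 = E - b 0 := by
    have h := hurec 0 (by omega)
    simp only [if_pos rfl] at h
    rw [hd, hu0] at *
    rw [div_one]
    rw [hu0] at h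
    simp at h
    rw [h]
  have hdrec : ∀ k, 1 ≤ k → k < m → d k = (E - b k) - a (k - 1) ^ 2 / d (k - 1) := by
    intro k hk1 hkm
    obtain ⟨k', rfl⟩ : ∃ k', k = k' + 1 := ⟨k - 1, by omega⟩
    have h := hurec (k' + 1) hkm
    rw [if_neg (Nat.succ_ne_zero k')] at h
    simp only [Nat.add_sub_cancel] at h ⊢
    have huk : u (k' + 1) ≠ 0 := hnz' _ (by omega)
    have huk' : u k' ≠ 0 := hnz' _ (by omega)
    have hak : a k' ≠ 0 := (ha k' (by omega)).ne'
    rw [hd, hd]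
    rw [h]
    field_simp
  have hdnz : ∀ k, k < m - 1 → d k ≠ 0 := by
    intro k hk
    rw [hd]
    have huk1 : u (k + 1) ≠ 0 := hnz' _ (by omega)
    have huk : u k ≠ 0 := hnz' _ (by omega)
    have hak : a k ≠ 0 := (ha k (by omega)).ne'
    exact div_ne_zero (mul_ne_zero hak huk1) huk
  have expand : ∀ k ∈ range m,
      (-(d k)) * (x' k - a k / d k * x' (k + 1)) ^ 2
        = -(d k) * x' k ^ 2 + 2 * a k * x' k * x' (k + 1)
          - a k ^ 2 / d k * x' (k + 1) ^ 2 := by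
    intro k hk
    rw [mem_range] at hk
    by_cases hdk : d k = 0
    · have hkm : k = m - 1 := by
        by_contra h
        exact hdnz k (by omega) hdk
      have : x' (k + 1) = 0 := hx'ge _ (by omega)
      rw [hdk, this]
      simp
    · field_simp
      ring
  rw [Finset.sum_congr rfl expand]
  have stepB : ∑ k ∈ range m, a k ^ 2 / d k * x' (k + 1) ^ 2
      = ∑ k ∈ range m, (if k = 0 then 0 else a (k - 1) ^ 2 / d (k - 1) * x' k ^ 2) := by
    obtain ⟨m', rfl⟩ : ∃ m', m = m' + 1 := ⟨m - 1, by omega⟩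
    rw [Finset.sum_range_succ (fun k => a k ^ 2 / d k * x' (k + 1) ^ 2) m',
      Finset.sum_range_succ' (fun k => if k = 0 then (0:ℝ)
        else a (k - 1) ^ 2 / d (k - 1) * x' k ^ 2) m',
      hx'ge (m' + 1) (by omega)]
    norm_num
  have sumeq : ∀ k ∈ range m,
      -(d k) * x' k ^ 2 - (if k = 0 then 0 else a (k - 1) ^ 2 / d (k - 1) * x' k ^ 2)
        = (b k - E) * x' k ^ 2 := by
    intro k hk
    rw [mem_range] at hk
    rcases Nat.eq_zero_or_pos k with rfl | hk1
    · rw [if_pos rfl, hd0]; ring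
    · rw [if_neg (by omega), hdrec k hk1 hk]; ring
  calc ∑ k ∈ range m, (-(d k) * x' k ^ 2 + 2 * a k * x' k * x' (k + 1)
          - a k ^ 2 / d k * x' (k + 1) ^ 2)
      = ∑ k ∈ range m, (-(d k) * x' k ^ 2) + ∑ k ∈ range m, 2 * a k * x' k * x' (k + 1)
        - ∑ k ∈ range m, a k ^ 2 / d k * x' (k + 1) ^ 2 := by
        rw [← Finset.sum_add_distrib, ← Finset.sum_sub_distrib]
    _ = ∑ k ∈ range m, (-(d k) * x' k ^ 2)
        - ∑ k ∈ range m, (if k = 0 then 0 else a (k - 1) ^ 2 / d (k - 1) * x' k ^ 2)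
        + ∑ k ∈ range m, 2 * a k * x' k * x' (k + 1) := by
        rw [stepB]; ring
    _ = ∑ k ∈ range m, (b k - E) * x' k ^ 2
        + ∑ k ∈ range m, 2 * a k * x' k * x' (k + 1) := by
        rw [← Finset.sum_sub_distrib, Finset.sum_congr rfl sumeq]

lemma bidiag_det {m : ℕ} (c : ℕ → ℝ) :
    (Matrix.of fun i j : Fin m => if (j : ℕ) = (i : ℕ) then (1:ℝ)
      else if (j : ℕ) = (i : ℕ) + 1 then c i else 0).det = 1 := by
  classical
  have htri : (Matrix.of fun i j : Fin m => if (j : ℕ) = (i : ℕ) then (1:ℝ)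
      else if (j : ℕ) = (i : ℕ) + 1 then c i else 0).BlockTriangular id := by
    intro i j hij
    have hji : (j : ℕ) < (i : ℕ) := hij
    simp only [Matrix.of_apply]
    rw [if_neg (by omega), if_neg (by omega)]
  rw [Matrix.det_of_upperTriangular htri]
  simp

lemma bidiag_mulVec {m : ℕ} (c : ℕ → ℝ) (x : Fin m → ℝ) (x' : ℕ → ℝ)
    (hx' : ∀ k : ℕ, x' k = if h : k < m then x ⟨k, h⟩ else 0) (i : Fin m) :
    ((Matrix.of fun i j : Fin m => if (j : ℕ) = (i : ℕ) then (1:ℝ)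
      else if (j : ℕ) = (i : ℕ) + 1 then c i else 0) *ᵥ x) i
      = x' (i : ℕ) + c i * x' ((i : ℕ) + 1) := by
  classical
  have hx'lt : ∀ (j : Fin m), x' (j : ℕ) = x j := fun j => by rw [hx', dif_pos j.isLt]
  have hx'ge : ∀ k, m ≤ k → x' k = 0 := fun k hk => by rw [hx', dif_neg (by omega)]
  have step : ((Matrix.of fun i j : Fin m => if (j : ℕ) = (i : ℕ) then (1:ℝ)
      else if (j : ℕ) = (i : ℕ) + 1 then c i else 0) *ᵥ x) i
      = ∑ j ∈ range m, ((if j = (i : ℕ) then x' j else 0)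
          + (if j = (i : ℕ) + 1 then c i * x' j else 0)) := by
    rw [show ((Matrix.of fun i j : Fin m => if (j : ℕ) = (i : ℕ) then (1:ℝ)
      else if (j : ℕ) = (i : ℕ) + 1 then c i else 0) *ᵥ x) i
      = ∑ j : Fin m, (if (j : ℕ) = (i : ℕ) then (1:ℝ)
        else if (j : ℕ) = (i : ℕ) + 1 then c i else 0) * x j from rfl]
    rw [← Fin.sum_univ_eq_sum_range (fun j => (if j = (i : ℕ) then x' j else 0)
          + (if j = (i : ℕ) + 1 then c i * x' j else 0)) m]
    refine Finset.sum_congr rfl fun j _ => ?_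
    rw [hx'lt]
    by_cases h1 : (j : ℕ) = (i : ℕ)
    · rw [if_pos h1, if_pos h1, if_neg (by omega)]
      ring
    · rw [if_neg h1, if_neg h1]
      by_cases h2 : (j : ℕ) = (i : ℕ) + 1
      · rw [if_pos h2, if_pos h2]
        ring
      · rw [if_neg h2, if_neg h2]
        ring
  rw [step, Finset.sum_add_distrib,
    Finset.sum_ite_eq' (range m) (i : ℕ) (fun j => x' j),
    Finset.sum_ite_eq' (range m) ((i : ℕ) + 1) (fun j => c i * x' j),
    if_pos (mem_range.2 i.isLt)]
  congr 1
  by_cases h : (i : ℕ) + 1 ∈ range m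
  · rw [if_pos h]
  · rw [if_neg h, hx'ge ((i : ℕ) + 1) (by simpa using h), mul_zero]


/-- **Oscillation Theorem (sign-change form).**
Assuming the Dirichlet solution `u` does not vanish at interior integer points
`1 ≤ j ≤ m-1`, the number of indices `j ∈ {0, …, m-1}` with `u j * u (j+1) < 0`
equals the number of eigenvalues of the `m × m` Jacobi matrix `J`
(counted with multiplicity) that are strictly greater than `E`. -/
theorem oscillation_theorem_sign_changes
    (m : ℕ) (hm : 1 ≤ m) (E : ℝ) (a b : ℕ → ℝ)
    (ha : ∀ n, n ≤ m - 1 → 0 < a n)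
    (J : Matrix (Fin m) (Fin m) ℝ)
    (hJ : ∀ i j : Fin m, J i j =
      if (i : ℕ) = (j : ℕ) then b i
      else if (i : ℕ) + 1 = (j : ℕ) then a i
      else if (j : ℕ) + 1 = (i : ℕ) then a j
      else 0)
    (hHerm : J.IsHermitian)
    (u : ℕ → ℝ) (hu0 : u 0 = 1)
    (hurec : ∀ n, n < m → a n * u (n + 1) =
      (E - b n) * u n - (if n = 0 then 0 else a (n - 1) * u (n - 1)))
    (hnz : ∀ j, 1 ≤ j → j ≤ m - 1 → u j ≠ 0) :
    ((Finset.range m).filter fun j => u j * u (j + 1) < 0).card =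
      (Finset.univ.filter fun i : Fin m => E < hHerm.eigenvalues i).card := by
  classical
  set d : ℕ → ℝ := fun k => a k * u (k + 1) / u k with hd
  set Q : (Fin m → ℝ) → ℝ := fun x => x ⬝ᵥ (J *ᵥ x) - E * (x ⬝ᵥ x) with hQ
  set ν : Fin m → ℝ := fun i => hHerm.eigenvalues i - E with hν
  set δ : Fin m → ℝ := fun i => -(d (i : ℕ)) with hδ
  set M : Matrix (Fin m) (Fin m) ℝ :=
    Matrix.of fun i j : Fin m => if (j : ℕ) = (i : ℕ) then (1:ℝ)
      else if (j : ℕ) = (i : ℕ) + 1 then -(a (i : ℕ) / d (i : ℕ)) else 0 with hM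
  have hMdet : IsUnit M.det := by
    rw [hM, bidiag_det (fun k => -(a k / d k))]
    exact isUnit_one
  have hMinv : Invertible M := M.invertibleOfIsUnitDet hMdet
  set T : (Fin m → ℝ) ≃ₗ[ℝ] (Fin m → ℝ) := M.toLinearEquiv' hMinv with hT
  have hTapp : ∀ x : Fin m → ℝ, T x = M *ᵥ x := by
    intro x
    rfl
  have hQr : ∀ x, Q x = ∑ i, ν i * (rEig hHerm x i) ^ 2 := fun x => eig_expand hHerm E x
  have hQs : ∀ x, Q x = ∑ i, δ i * (T x i) ^ 2 := by
    intro x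
    set x' : ℕ → ℝ := fun k => if h : k < m then x ⟨k, h⟩ else 0 with hx'
    have hx'def : ∀ k : ℕ, x' k = if h : k < m then x ⟨k, h⟩ else 0 := fun k => rfl
    have hx'ge : ∀ k, m ≤ k → x' k = 0 := fun k hk => by
      rw [hx'def, dif_neg (by omega)]
    have h1 := quad_expand hm a b J hJ x x' hx'def
    have h2 := dot_self_expand x x' hx'def
    have h3 := key_identity hm E a b u ha hu0 hurec hnz d (fun k => rfl) x' hx'ge
    have hterm : ∀ i : Fin m, δ i * (T x i) ^ 2
        = -(d (i : ℕ)) * (x' (i : ℕ) - a (i : ℕ) / d (i : ℕ) * x' ((i : ℕ) + 1)) ^ 2 := by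
      intro i
      rw [hTapp, hM, bidiag_mulVec (fun k => -(a k / d k)) x x' hx'def i]
      rw [hδ]
      ring
    calc Q x = ∑ i ∈ Finset.range m, (b i - E) * x' i ^ 2
        + ∑ i ∈ Finset.range m, 2 * a i * x' i * x' (i + 1) := by
          rw [hQ]
          simp only [h1, h2, Finset.mul_sum]
          rw [add_sub_right_comm]
          congr 1
          rw [← Finset.sum_sub_distrib]
          exact Finset.sum_congr rfl fun i _ => by ring
      _ = ∑ k ∈ Finset.range m, (-(d k)) * (x' k - a k / d k * x' (k + 1)) ^ 2 := h3.symm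
      _ = ∑ i, δ i * (T x i) ^ 2 := by
          rw [Finset.sum_congr rfl (fun i (_ : i ∈ Finset.univ) => hterm i),
            Fin.sum_univ_eq_sum_range
              (fun k => -(d k) * (x' k - a k / d k * x' (k + 1)) ^ 2) m]
  have hcount : (Finset.univ.filter fun i => 0 < ν i).card
      = (Finset.univ.filter fun i => 0 < δ i).card :=
    le_antisymm (inertia_le Q ν δ (rEig hHerm) T hQr hQs)
      (inertia_le Q δ ν T (rEig hHerm) hQs hQr)
  have hnz' : ∀ k, k ≤ m - 1 → u k ≠ 0 := by
    intro k hk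
    rcases Nat.eq_zero_or_pos k with rfl | hk1
    · rw [hu0]; norm_num
    · exact hnz k hk1 hk
  have hsign : ∀ k : ℕ, k < m → (0 < -(d k) ↔ u k * u (k + 1) < 0) := by
    intro k hk
    have hak := ha k (by omega)
    have huk := hnz' k (by omega)
    rw [neg_pos, hd]
    simp only
    constructor
    · intro h'
      rcases div_neg_iff.1 h' with ⟨h1, h2⟩ | ⟨h1, h2⟩
      · nlinarith [mul_neg_of_neg_of_pos h2 h1]
      · nlinarith [mul_neg_of_neg_of_pos h1 h2]
    · intro h'
      rcases mul_neg_iff.1 h' with ⟨h1, h2⟩ | ⟨h1, h2⟩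
      · exact div_neg_iff.2 (Or.inr ⟨mul_neg_of_pos_of_neg hak h2, h1⟩)
      · exact div_neg_iff.2 (Or.inl ⟨mul_pos hak h2, h1⟩)
  have hν_filter : (Finset.univ.filter fun i : Fin m => E < hHerm.eigenvalues i)
      = (Finset.univ.filter fun i => 0 < ν i) := by
    apply Finset.filter_congr
    intro i _
    rw [hν]
    simp [sub_pos]
  have hδ_filter : ((Finset.range m).filter fun j => u j * u (j + 1) < 0).card
      = (Finset.univ.filter fun i : Fin m => 0 < δ i).card := by
    apply Finset.card_bij (fun (j : ℕ) (hj : j ∈ (Finset.range m).filter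
      fun j => u j * u (j + 1) < 0) => (⟨j, by
        have := (Finset.mem_filter.1 hj).1; exact Finset.mem_range.1 this⟩ : Fin m))
    · intro j hj
      have h := Finset.mem_filter.1 hj
      refine Finset.mem_filter.2 ⟨Finset.mem_univ _, ?_⟩
      rw [hδ]
      simp only
      exact (hsign j (Finset.mem_range.1 h.1)).2 h.2
    · intro j1 hj1 j2 hj2 h
      simpa using congrArg Fin.val h
    · intro i hi
      have h := Finset.mem_filter.1 hi
      refine ⟨(i : ℕ), Finset.mem_filter.2 ⟨Finset.mem_range.2 i.isLt, ?_⟩, rfl⟩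
      have : 0 < -(d (i : ℕ)) := h.2
      exact (hsign (i : ℕ) i.isLt).1 this
  rw [hδ_filter, hν_filter, hcount]
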